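/- Let G be a finite group whose Sylow 2-subgroup is cyclic. Then G is 2-nilpotent. -/

import Mathlib

def TwoNilpotent (G : Type*) [Group G] : Prop :=
  ∃ N : Subgroup G, N.Normal ∧ Odd (Nat.card N) ∧ ∃ k : ℕ, N.index = 2 ^ k

theorem stmt14 {G : Type*} [Group G] [Finite G] (P : Sylow 2 G)
    (hcyc : IsCyclic (P : Subgroup G)) : TwoNilpotent G := by
  have hfact : Fact (Nat.Prime 2) := ⟨Nat.prime_two⟩
  set H : Subgroup G := (P : Subgroup G) with hH
  obtain ⟨n, hn⟩ : ∃ n, Nat.card H = 2 ^ n := P.2.exists_card_eq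
  -- Aut H is a 2-group
  have hAut : ∃ m, Nat.card (MulAut H) = 2 ^ m := by
    rw [IsCyclic.card_mulAut, hn]
    rcases Nat.eq_zero_or_pos n with h0 | h0
    · exact ⟨0, by simp [h0]⟩
    · refine ⟨n - 1, ?_⟩
      rw [Nat.totient_prime_pow Nat.prime_two h0]
      simp
  -- H.index is odd
  have hodd : ¬ 2 ∣ H.index := P.not_dvd_index
  -- the key: N(H) ≤ C(H)
  have hP : Subgroup.normalizer (H : Set G) ≤ Subgroup.centralizer (H : Set G) := by
    have hkertop : H.normalizerMonoidHom.ker = ⊤ := by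
      rw [← Subgroup.index_eq_one]
      have h1 : H.normalizerMonoidHom.ker.index ∣ Nat.card (MulAut H) := by
        rw [Subgroup.index_ker]
        exact Subgroup.card_subgroup_dvd_card _
      have h2 : H.normalizerMonoidHom.ker.index ∣ H.index := by
        have hHC : H ≤ Subgroup.centralizer (H : Set G) := by
          haveI : IsMulCommutative H := by
            haveI := hcyc
            letI : CommGroup H := IsCyclic.commGroup
            exact ⟨⟨mul_comm⟩⟩
          exact Subgroup.le_centralizer H
        have hle : H.subgroupOf (Subgroup.normalizer (H : Set G)) ≤ H.normalizerMonoidHom.ker := by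
          rw [Subgroup.normalizerMonoidHom_ker]
          exact fun x hx => hHC hx
        refine (Subgroup.index_dvd_of_le hle).trans ?_
        have := Subgroup.relIndex_mul_index (H := H) Subgroup.le_normalizer
        exact Dvd.intro _ this
      obtain ⟨m, hm⟩ := hAut
      rw [hm] at h1
      obtain ⟨j, hj, hj2⟩ := (Nat.dvd_prime_pow Nat.prime_two).mp h1
      rcases Nat.eq_zero_or_pos j with h0 | h0
      · simp [hj2, h0]
      · exact absurd (dvd_trans (hj2 ▸ dvd_pow_self 2 h0.ne') h2) hodd
    intro x hx
    have : (⟨x, hx⟩ : Subgroup.normalizer (H : Set G)) ∈ H.normalizerMonoidHom.ker := hkertop ▸ trivial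
    rw [Subgroup.normalizerMonoidHom_ker] at this
    exact this
  refine ⟨(MonoidHom.transferSylow P hP).ker, MonoidHom.normal_ker _, ?_, ?_⟩
  · exact Nat.odd_iff.mpr (Nat.two_dvd_ne_zero.mp
      (MonoidHom.not_dvd_card_ker_transferSylow P hP))
  · exact ⟨n, by rw [(MonoidHom.ker_transferSylow_isComplement' P hP).symm.index_eq_card, hn]⟩
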